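/- Let N ≥ 1 and n ≥ 1, let E = EuclideanSpace ℝ (Fin n), and let L be an N × N real matrix satisfying: (a) ∑_j L i j = 0 for every row i and ∑_i L i j = 0 for every column j; (b) for every x : Fin N → ℝ, if ∑_j L i j · x j = 0 for all i, then there is a constant c with x i = c for all i (the kernel condition satisfied by the Laplacian of a connected undirected graph). For each i let fⁱ : E → ℝ be differentiable and convex, with gradient ∇fⁱ. Suppose y, v : Fin N → E satisfy: (1) ∑_j L i j • y j = 0 for all i; (2) ∇fⁱ(y i) + ∑_j L i j • y j + v i = 0 for all i; (3) ∑_i v i = 0. Then there exists z* ∈ E such that y i = z* for all i, ∑_i ∇fⁱ(z*) = 0, v i = −∇fⁱ(z*) for all i, and z* is a global minimizer of the function x ↦ ∑_i fⁱ(x). -/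

import Mathlib

open Set

/-- A convex differentiable function with zero Fréchet derivative at a point attains
its global minimum there. -/
lemma min_of_fderiv_zero {E : Type*} [NormedAddCommGroup E] [NormedSpace ℝ E]
    (g : E → ℝ) (hc : ConvexOn ℝ Set.univ g) (z : E)
    (h0 : HasFDerivAt g (0 : E →L[ℝ] ℝ) z) : ∀ x, g z ≤ g x := by
  intro x
  -- consider φ t = g (z + t • (x - z))
  set A : ℝ →ᵃ[ℝ] E := AffineMap.lineMap z x with hA
  have hφc : ConvexOn ℝ Set.univ (g ∘ A) := by
    have := hc.comp_affineMap A
    simpa using this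
  have hcurve : HasDerivAt (fun t : ℝ => A t) (x - z) 0 := by
    have : (fun t : ℝ => A t) = fun t : ℝ => t • (x - z) + z := by
      funext t
      simp [hA, AffineMap.lineMap_apply]
    rw [this]
    simpa using ((hasDerivAt_id (0:ℝ)).smul_const (x - z)).add_const z
  have hA0 : A 0 = z := by simp [hA]
  have hφd : HasDerivAt (g ∘ A) 0 0 := by
    have h0' : HasFDerivAt g (0 : E →L[ℝ] ℝ) ((fun t : ℝ => A t) 0) := by
      simpa [hA0] using h0
    have := h0'.comp_hasDerivAt (0:ℝ) hcurve
    simpa using this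
  have hslope := hφc.le_slope_of_hasDerivAt (x := (0:ℝ)) (y := (1:ℝ))
    (mem_univ _) (mem_univ _) one_pos hφd
  have : A 1 = x := by simp [hA]
  rw [slope_def_field] at hslope
  simp only [Function.comp, this, hA0] at hslope
  simpa using hslope

/-- Proposition 1: the equilibrium points of the auxiliary dynamics are
the optimal consensus configuration. -/
theorem equilibrium_is_optimal
    (N n : ℕ) (hN : 1 ≤ N) (hn : 1 ≤ n)
    (L : Matrix (Fin N) (Fin N) ℝ)
    (hrow : ∀ i, ∑ j, L i j = 0) (hcol : ∀ j, ∑ i, L i j = 0)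
    (hker : ∀ x : Fin N → ℝ, (∀ i, ∑ j, L i j * x j = 0) → ∃ c, ∀ i, x i = c)
    (f : Fin N → EuclideanSpace ℝ (Fin n) → ℝ)
    (hdiff : ∀ i, Differentiable ℝ (f i))
    (hconv : ∀ i, ConvexOn ℝ Set.univ (f i))
    (y v : Fin N → EuclideanSpace ℝ (Fin n))
    (h1 : ∀ i, ∑ j, L i j • y j = 0)
    (h2 : ∀ i, gradient (f i) (y i) + ∑ j, L i j • y j + v i = 0)
    (h3 : ∑ i, v i = 0) :
    ∃ zstar : EuclideanSpace ℝ (Fin n),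
      (∀ i, y i = zstar) ∧
      (∑ i, gradient (f i) zstar = 0) ∧
      (∀ i, v i = -gradient (f i) zstar) ∧
      (∀ x : EuclideanSpace ℝ (Fin n), ∑ i, f i zstar ≤ ∑ i, f i x) := by
  have i0 : Fin N := ⟨0, hN⟩
  -- consensus: y is constant
  have hconst : ∀ k : Fin n, ∃ c, ∀ i, y i k = c := by
    intro k
    refine hker (fun i => y i k) (fun i => ?_)
    have := congrArg (EuclideanSpace.proj (𝕜 := ℝ) k) (h1 i)
    rw [map_sum] at this
    simpa [smul_eq_mul] using this
  set zstar := y i0 with hz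
  have hy : ∀ i, y i = zstar := by
    intro i
    ext k
    obtain ⟨c, hc⟩ := hconst k
    rw [hc i, ← hc i0]
  -- v from h2
  have hv : ∀ i, v i = -gradient (f i) zstar := by
    intro i
    have h := h2 i
    rw [h1 i, hy i] at h
    have : gradient (f i) zstar + v i = 0 := by simpa using h
    exact eq_neg_of_add_eq_zero_right this
  -- sum of gradients is zero
  have hsum : ∑ i, gradient (f i) zstar = 0 := by
    have : ∑ i, v i = ∑ i, -gradient (f i) zstar := Finset.sum_congr rfl fun i _ => hv i
    rw [h3] at this
    rw [Finset.sum_neg_distrib] at this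
    exact neg_eq_zero.mp this.symm
  refine ⟨zstar, hy, hsum, hv, ?_⟩
  -- optimality
  have hFconv : ConvexOn ℝ Set.univ (fun x : EuclideanSpace ℝ (Fin n) => ∑ i, f i x) := by
    classical
    have : ∀ s : Finset (Fin N),
        ConvexOn ℝ Set.univ (fun x : EuclideanSpace ℝ (Fin n) => ∑ i ∈ s, f i x) := by
      intro s
      induction s using Finset.induction with
      | empty => simpa using convexOn_const (0:ℝ) convex_univ
      | insert _ _ hnotmem ih =>
        simp only [Finset.sum_insert hnotmem]
        exact (hconv _).add ih
    exact this Finset.univ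
  have hFderiv : HasFDerivAt (fun x : EuclideanSpace ℝ (Fin n) => ∑ i, f i x)
      (0 : EuclideanSpace ℝ (Fin n) →L[ℝ] ℝ) zstar := by
    have hder : ∀ i : Fin N, HasFDerivAt (f i)
        ((InnerProductSpace.toDual ℝ (EuclideanSpace ℝ (Fin n)))
          (gradient (f i) zstar) : EuclideanSpace ℝ (Fin n) →L[ℝ] ℝ) zstar := by
      intro i
      exact hasGradientAt_iff_hasFDerivAt.mp ((hdiff i zstar).hasGradientAt)
    have hsumder := HasFDerivAt.fun_sum (fun i (_ : i ∈ Finset.univ) => hder i)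
    have heq : (∑ i : Fin N, ((InnerProductSpace.toDual ℝ (EuclideanSpace ℝ (Fin n)))
          (gradient (f i) zstar) : EuclideanSpace ℝ (Fin n) →L[ℝ] ℝ))
        = (0 : EuclideanSpace ℝ (Fin n) →L[ℝ] ℝ) := by
      rw [← map_sum, hsum, map_zero]
    rwa [heq] at hsumder
  exact min_of_fderiv_zero _ hFconv zstar hFderiv
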